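/- Let A be an m×n design matrix and q ∈ ri(Δⁿ). Then q lies in the image p_A(Θ) of the toric model if and only if the vector (log q₁, …, log qₙ) lies in the real span of the rows of A. -/

import Mathlib

/- STATEMENT 4: For q in the relative interior of the simplex, q lies in the image
   of the toric model p_A iff log q lies in the real row span of A. -/

open scoped BigOperators

noncomputable section

/-- `A` is a design matrix: all column sums are equal. -/
def IsDesign {m n : ℕ} (A : Matrix (Fin m) (Fin n) ℤ) : Prop :=
  ∃ c : ℤ, ∀ j, ∑ i, A i j = c

/-- The parameter space Θ of the toric model of `A`. -/
def paramSpace {m n : ℕ} (A : Matrix (Fin m) (Fin n) ℤ) : Set (Fin m → ℝ) :=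
  {θ | (∀ i, 0 < θ i) ∧ ∑ j, ∏ i, θ i ^ A i j = 1}

/-- The toric model map `p_A`, with `p_j(θ) = θ^{a_j}`. -/
def toricModel {m n : ℕ} (A : Matrix (Fin m) (Fin n) ℤ) (θ : Fin m → ℝ) :
    Fin n → ℝ := fun j => ∏ i, θ i ^ A i j

theorem stmt4 {m n : ℕ} (A : Matrix (Fin m) (Fin n) ℤ) (hA : IsDesign A)
    (q : Fin n → ℝ) (hqpos : ∀ j, 0 < q j) (hqsum : ∑ j, q j = 1) :
    (∃ θ ∈ paramSpace A, q = toricModel A θ) ↔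
      (fun j => Real.log (q j)) ∈
        Submodule.span ℝ (Set.range fun i : Fin m => fun j : Fin n => (A i j : ℝ)) := by
  simp only [paramSpace, toricModel, Set.mem_setOf_eq]
  rw [Submodule.mem_span_range_iff_exists_fun ℝ]
  constructor
  · rintro ⟨θ, ⟨hpos, hsum⟩, rfl⟩
    refine ⟨fun i => Real.log (θ i), ?_⟩
    funext j
    simp only [Finset.sum_apply, Pi.smul_apply, smul_eq_mul, toricModel]
    rw [Real.log_prod (fun i _ => (zpow_pos (hpos i) _).ne')]
    exact Finset.sum_congr rfl fun i _ => by
      rw [Real.log_zpow]; ring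
  · rintro ⟨c, hc⟩
    have key : ∀ j, ∏ i, Real.exp (c i) ^ A i j = q j := by
      intro j
      have h1 : ∏ i, Real.exp (c i) ^ A i j = Real.exp (∑ i, (A i j : ℝ) * c i) := by
        rw [Real.exp_sum]
        exact Finset.prod_congr rfl fun i _ => by
          rw [← Real.rpow_intCast, Real.rpow_def_of_pos (Real.exp_pos _), Real.log_exp,
            mul_comm]
      rw [h1]
      have h2 := congrFun hc j
      simp only [Finset.sum_apply, Pi.smul_apply, smul_eq_mul] at h2
      rw [show (∑ i, (A i j : ℝ) * c i) = ∑ i, c i * (A i j : ℝ) from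
        Finset.sum_congr rfl fun i _ => mul_comm _ _, h2, Real.exp_log (hqpos j)]
    refine ⟨fun i => Real.exp (c i), ⟨fun i => Real.exp_pos _, ?_⟩, ?_⟩
    · simp only [key]; exact hqsum
    · funext j; exact (key j).symm
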